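/- Let d be a positive natural number, let ρ_in, ρ_out, s, η ∈ ℝ and u_in, u_out ∈ ℝ^d, and define the dissipative upwind flux of a scalar quantity with traces q_in, q_out by Up(q) = q_out·min(s,0) + q_in·max(s,0) − (η/2)·(q_out − q_in), applied componentwise to vector quantities. Then (1/2)·Up(ρ)·(|u_out|² − |u_in|²) − Up(ρ u) · (u_out − u_in) = (η/2)·((ρ_in + ρ_out)/2)·|u_out − u_in|² + (1/2)·(ρ_in·max(s,0) − ρ_out·min(s,0))·|u_out − u_in|², where ρ u denotes the vector with traces ρ_in·u_in and ρ_out·u_out, · is the Euclidean inner product and |·| the Euclidean norm on ℝ^d. -/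

import Mathlib

/-- The per-face algebraic identity completing the proof of the discrete energy balance:
the difference between the upwind transport of kinetic energy and the upwind momentum flux
tested with the velocity jump equals a sum of two nonnegative numerical dissipation terms. -/
theorem upwind_kinetic_energy_dissipation_identity
    (d : ℕ) (hd : 0 < d) (ρin ρout s η : ℝ)
    (uin uout : EuclideanSpace ℝ (Fin d)) :
    (1 / 2) * (ρout * min s 0 + ρin * max s 0 - (η / 2) * (ρout - ρin))
        * (‖uout‖ ^ 2 - ‖uin‖ ^ 2)
      - (inner ℝ (min s 0 • (ρout • uout) + max s 0 • (ρin • uin)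
          - (η / 2) • (ρout • uout - ρin • uin)) (uout - uin) : ℝ)
    = (η / 2) * ((ρin + ρout) / 2) * ‖uout - uin‖ ^ 2
      + (1 / 2) * (ρin * max s 0 - ρout * min s 0) * ‖uout - uin‖ ^ 2 := by
  simp only [inner_sub_left, inner_add_left, inner_smul_left, inner_sub_right,
    norm_sub_sq_real, real_inner_self_eq_norm_sq, real_inner_comm uin uout,
    RCLike.conj_to_real]
  ring
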